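/- For the flat triangle of the Schwarz lantern, writing A²_pqr = (π/(2NM))² for the squared exact (cylindrical) area and Ā²_pqr = (1/16)·L̄²_pr·(4L̄²_pq − L̄²_pr) with L̄²_pr = 4sin²(π/N) and L̄²_pq = 4sin²(π/(2N)) + 1/(4M²), the fractional error satisfies π²/(3N²) − (π⁴/(45N⁴))·(2 + 45M²) < (A²_pqr − Ā²_pqr)/A²_pqr < π²/(3N²) for all integers N, M ≥ 1 (with N sufficiently large if needed). -/

import Mathlib

open Real Filter Asymptotics

/-- Squared Euclidean distance between two points of `ℝ³`. -/
noncomputable def distSq (a b : Fin 3 → ℝ) : ℝ :=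
  (a 0 - b 0) ^ 2 + (a 1 - b 1) ^ 2 + (a 2 - b 2) ^ 2

/-- Euclidean inner product on `ℝ³`. -/
noncomputable def inner3 (a b : Fin 3 → ℝ) : ℝ :=
  a 0 * b 0 + a 1 * b 1 + a 2 * b 2

/-- Euclidean area of the triangle with vertices `a b c` in `ℝ³`
(half the norm of the cross product of two edge vectors). -/
noncomputable def triArea (a b c : Fin 3 → ℝ) : ℝ :=
  (1 / 2) * Real.sqrt
    (((b 1 - a 1) * (c 2 - a 2) - (b 2 - a 2) * (c 1 - a 1)) ^ 2 +
     ((b 2 - a 2) * (c 0 - a 0) - (b 0 - a 0) * (c 2 - a 2)) ^ 2 +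
     ((b 0 - a 0) * (c 1 - a 1) - (b 1 - a 1) * (c 0 - a 0)) ^ 2)

/-- Vertex `p = (1,0,0)` of a typical Schwarz-lantern triangle. -/
noncomputable def vecP : Fin 3 → ℝ := ![1, 0, 0]

/-- Vertex `q = (cos(π/N), sin(π/N), 1/(2M))` of a typical Schwarz-lantern triangle. -/
noncomputable def vecQ (N M : ℝ) : Fin 3 → ℝ := ![Real.cos (π / N), Real.sin (π / N), 1 / (2 * M)]

/-- Vertex `r = (cos(2π/N), sin(2π/N), 0)` of a typical Schwarz-lantern triangle. -/
noncomputable def vecR (N : ℝ) : Fin 3 → ℝ := ![Real.cos (2 * π / N), Real.sin (2 * π / N), 0]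

/-- Outward unit normal of the unit cylinder `x² + y² = 1` at a point `(x,y,z)`. -/
noncomputable def cylNormal (v : Fin 3 → ℝ) : Fin 3 → ℝ := ![v 0, v 1, 0]


lemma mySinLB (x : ℝ) (hx : 0 ≤ x) : x - x ^ 3 / 6 ≤ Real.sin x := by
  have hd : ∀ y : ℝ, HasDerivAt (fun z : ℝ => Real.sin z - (z - z ^ 3 / 6))
      (Real.cos y - (1 - y ^ 2 / 2)) y := by
    intro y
    have h3 : HasDerivAt (fun z : ℝ => z ^ 3 / 6) (y ^ 2 / 2) y := by
      have := (hasDerivAt_pow 3 y).div_const 6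
      refine this.congr_deriv ?_
      push_cast
      ring
    have h2 : HasDerivAt (fun z : ℝ => z - z ^ 3 / 6) (1 - y ^ 2 / 2) y :=
      (hasDerivAt_id' (x := y)).sub h3
    exact (Real.hasDerivAt_sin y).sub h2
  have hmono : MonotoneOn (fun z : ℝ => Real.sin z - (z - z ^ 3 / 6)) (Set.Ici 0) := by
    apply monotoneOn_of_deriv_nonneg (convex_Ici 0)
    · exact Continuous.continuousOn (by continuity)
    · intro y _; exact (hd y).differentiableAt.differentiableWithinAt
    · intro y _
      rw [(hd y).deriv]
      nlinarith [Real.one_sub_sq_div_two_le_cos (x := y)]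
  have h0 := hmono Set.self_mem_Ici (Set.mem_Ici.2 hx) hx
  simp only [Real.sin_zero] at h0
  nlinarith [h0]

lemma myCosUB (x : ℝ) (hx : 0 ≤ x) : Real.cos x ≤ 1 - x ^ 2 / 2 + x ^ 4 / 24 := by
  have hd : ∀ y : ℝ, HasDerivAt (fun z : ℝ => 1 - z ^ 2 / 2 + z ^ 4 / 24 - Real.cos z)
      (Real.sin y - (y - y ^ 3 / 6)) y := by
    intro y
    have h2 : HasDerivAt (fun z : ℝ => 1 - z ^ 2 / 2 + z ^ 4 / 24)
        (-(y) + y ^ 3 / 6) y := by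
      have ha := ((hasDerivAt_pow 2 y).div_const 2)
      have hb := ((hasDerivAt_pow 4 y).div_const 24)
      have := ((hasDerivAt_const y (1:ℝ)).sub ha).add hb
      refine this.congr_deriv ?_
      push_cast
      ring
    have := h2.sub (Real.hasDerivAt_cos y)
    refine this.congr_deriv ?_
    ring
  have hmono : MonotoneOn (fun z : ℝ => 1 - z ^ 2 / 2 + z ^ 4 / 24 - Real.cos z) (Set.Ici 0) := by
    apply monotoneOn_of_deriv_nonneg (convex_Ici 0)
    · exact Continuous.continuousOn (by continuity)
    · intro y _; exact (hd y).differentiableAt.differentiableWithinAt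
    · intro y hy
      rw [(hd y).deriv]
      have hy0 : (0:ℝ) ≤ y := le_of_lt (by simpa [interior_Ici] using hy)
      nlinarith [mySinLB y hy0]
  have h0 := hmono Set.self_mem_Ici (Set.mem_Ici.2 hx) hx
  simp only [Real.cos_zero] at h0
  nlinarith [h0]

lemma mySinUB (x : ℝ) (hx : 0 ≤ x) : Real.sin x ≤ x - x ^ 3 / 6 + x ^ 5 / 120 := by
  have hd : ∀ y : ℝ, HasDerivAt (fun z : ℝ => z - z ^ 3 / 6 + z ^ 5 / 120 - Real.sin z)
      (1 - y ^ 2 / 2 + y ^ 4 / 24 - Real.cos y) y := by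
    intro y
    have h3 : HasDerivAt (fun z : ℝ => z ^ 3 / 6) (y ^ 2 / 2) y := by
      have := (hasDerivAt_pow 3 y).div_const 6
      refine this.congr_deriv ?_; push_cast; ring
    have h5 : HasDerivAt (fun z : ℝ => z ^ 5 / 120) (y ^ 4 / 24) y := by
      have := (hasDerivAt_pow 5 y).div_const 120
      refine this.congr_deriv ?_; push_cast; ring
    exact (((hasDerivAt_id' (x := y)).sub h3).add h5).sub (Real.hasDerivAt_sin y)
  have hmono : MonotoneOn (fun z : ℝ => z - z ^ 3 / 6 + z ^ 5 / 120 - Real.sin z) (Set.Ici 0) := by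
    apply monotoneOn_of_deriv_nonneg (convex_Ici 0)
    · exact Continuous.continuousOn (by continuity)
    · intro y _; exact (hd y).differentiableAt.differentiableWithinAt
    · intro y hy
      rw [(hd y).deriv]
      have hy0 : (0:ℝ) ≤ y := le_of_lt (by simpa [interior_Ici] using hy)
      nlinarith [myCosUB y hy0]
  have h0 := hmono Set.self_mem_Ici (Set.mem_Ici.2 hx) hx
  simp only [Real.sin_zero] at h0
  nlinarith [h0]

set_option maxHeartbeats 1600000 in
/-- fractional error bounds for the flat-triangle area of the Schwarz lantern:
`π²/(3N²) − (π⁴/(45N⁴))(2 + 45M²) < (A² − Ā²)/A² < π²/(3N²)` for all `M ≥ 1` and all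
sufficiently large `N`. -/
theorem schwarz_fractional_error_bounds :
    ∃ N₀ : ℕ, ∀ N M : ℕ, N₀ ≤ N → 1 ≤ M →
      let Lpr2 : ℝ := 4 * Real.sin (π / N) ^ 2
      let Lpq2 : ℝ := 4 * Real.sin (π / (2 * N)) ^ 2 + 1 / (4 * (M : ℝ) ^ 2)
      let A2 : ℝ := (π / (2 * N * M)) ^ 2
      let Abar2 : ℝ := (1 / 16) * Lpr2 * (4 * Lpq2 - Lpr2)
      π ^ 2 / (3 * N ^ 2) - (π ^ 4 / (45 * N ^ 4)) * (2 + 45 * M ^ 2) < (A2 - Abar2) / A2 ∧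
      (A2 - Abar2) / A2 < π ^ 2 / (3 * N ^ 2) := by
  refine ⟨4, fun N M hN hM => ?_⟩
  intro Lpr2 Lpq2 A2 Abar2
  simp only [Lpr2, Lpq2, A2, Abar2]
  clear Lpr2 Lpq2 A2 Abar2
  have hNr : (4:ℝ) ≤ (N:ℝ) := by exact_mod_cast hN
  have hN0 : (0:ℝ) < (N:ℝ) := by linarith
  have hNne : (N:ℝ) ≠ 0 := ne_of_gt hN0
  have hMr : (1:ℝ) ≤ (M:ℝ) := by exact_mod_cast hM
  have hM0 : (0:ℝ) < (M:ℝ) := by linarith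
  have hMne : (M:ℝ) ≠ 0 := ne_of_gt hM0
  set x : ℝ := π / N with hxdef
  have hxpos : 0 < x := div_pos Real.pi_pos hN0
  have hxne : x ≠ 0 := ne_of_gt hxpos
  have hxle1 : x ≤ 1 := by
    rw [hxdef, div_le_one hN0]
    linarith [Real.pi_le_four]
  have hxltpi : x < π := by
    rw [hxdef, div_lt_iff₀ hN0]
    nlinarith [Real.pi_pos]
  have e1 : π / (2 * (N:ℝ)) = x / 2 := by rw [hxdef, div_div]; congr 1; ring
  have e2 : π / (2 * (N:ℝ) * M) = x / (2 * M) := by rw [hxdef, div_div]; congr 1; ring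
  have e3 : π ^ 2 / (3 * (N:ℝ) ^ 2) = x ^ 2 / 3 := by
    rw [hxdef, div_pow, div_div]; congr 1; ring
  have e4 : π ^ 4 / (45 * (N:ℝ) ^ 4) = x ^ 4 / 45 := by
    rw [hxdef, div_pow, div_div]; congr 1; ring
  rw [e1, e2, e3, e4]
  set s : ℝ := Real.sin x with hsdef
  set t : ℝ := Real.sin (x / 2) with htdef
  have hspos : 0 < s := Real.sin_pos_of_pos_of_lt_pi hxpos hxltpi
  have htpos : 0 < t := Real.sin_pos_of_pos_of_lt_pi (by linarith) (by linarith)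
  have hslt : s < x := Real.sin_lt hxpos
  have htlt : t < x / 2 := Real.sin_lt (by linarith)
  -- double angle identity: s^2 = 4 t^2 (1 - t^2)
  have h2m := Real.sin_two_mul (x / 2)
  rw [show 2 * (x / 2) = x by ring] at h2m
  have hcs : Real.sin (x / 2) ^ 2 + Real.cos (x / 2) ^ 2 = 1 := Real.sin_sq_add_cos_sq _
  have hident : s ^ 2 = 4 * t ^ 2 * (1 - t ^ 2) := by
    rw [hsdef, htdef]
    nlinarith [hcs, h2m]
  -- Taylor bounds
  have hsLB : x - x ^ 3 / 6 ≤ s := mySinLB x hxpos.le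
  have hsUB : s ≤ x - x ^ 3 / 6 + x ^ 5 / 120 := mySinUB x hxpos.le
  have hs2UB : s ^ 2 ≤ x ^ 2 - x ^ 4 / 3 + 2 * x ^ 6 / 45 := by
    have hu := mul_self_le_mul_self hspos.le hsUB
    have hx2le : x ^ 2 ≤ 1 := by nlinarith
    have hx10 : x ^ 10 ≤ x ^ 8 := by
      nlinarith [mul_le_mul_of_nonneg_left hx2le (le_of_lt (pow_pos hxpos 8))]
    nlinarith [hu, hx10]
  have hs2LB : x ^ 2 - x ^ 4 / 3 < s ^ 2 := by
    have h0 : 0 < x - x ^ 3 / 6 := by nlinarith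
    nlinarith [mul_self_le_mul_self h0.le hsLB, pow_pos hxpos 6]
  have hx2 : (0:ℝ) < x ^ 2 := by positivity
  have key : ((x / (2 * M)) ^ 2 - 1 / 16 * (4 * s ^ 2) *
        (4 * (4 * t ^ 2 + 1 / (4 * (M:ℝ) ^ 2)) - 4 * s ^ 2)) / (x / (2 * M)) ^ 2
      = (x ^ 2 - (16 * M ^ 2 * s ^ 2 * t ^ 2 + s ^ 2 - 4 * M ^ 2 * s ^ 4)) / x ^ 2 := by
    field_simp
    ring
  rw [key]
  have f1 : 16 * (M:ℝ) ^ 2 * s ^ 2 * t ^ 2 - 4 * M ^ 2 * s ^ 4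
      = 16 * M ^ 2 * s ^ 2 * t ^ 4 := by
    linear_combination (-4 * (M:ℝ) ^ 2 * s ^ 2) * hident
  constructor
  · rw [lt_div_iff₀ hx2]
    have hs2lt : s ^ 2 < x ^ 2 := by nlinarith [mul_self_lt_mul_self hspos.le hslt]
    have ht2lt : t ^ 2 < x ^ 2 / 4 := by nlinarith [mul_self_lt_mul_self htpos.le htlt]
    have ht4 : t ^ 2 * t ^ 2 < x ^ 2 / 4 * (x ^ 2 / 4) :=
      mul_self_lt_mul_self (sq_nonneg t) ht2lt
    have a1 : s ^ 2 * (t ^ 2 * t ^ 2) < x ^ 2 * (t ^ 2 * t ^ 2) :=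
      mul_lt_mul_of_pos_right hs2lt (by positivity)
    have a2 : x ^ 2 * (t ^ 2 * t ^ 2) < x ^ 2 * (x ^ 2 / 4 * (x ^ 2 / 4)) :=
      mul_lt_mul_of_pos_left ht4 hx2
    have hst4 : 16 * s ^ 2 * t ^ 4 < x ^ 6 := by linarith [a1, a2]
    have hMmul := mul_lt_mul_of_pos_left hst4 (by positivity : (0:ℝ) < (M:ℝ) ^ 2)
    linarith [hs2UB, hMmul, f1]
  · rw [div_lt_iff₀ hx2]
    have hpos : (0:ℝ) ≤ 16 * (M:ℝ) ^ 2 * s ^ 2 * t ^ 4 := by positivity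
    linarith [hs2LB, f1, hpos]
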